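/- Let V' ⊆ ℚⁿ be a convex set, d ≥ 1, and partition ℚⁿ into half-open cubes x₀ + dt + [0,d)ⁿ for t ∈ ℤⁿ, where x₀ ∈ ℤⁿ ∩ V'. For any y ∈ ℤⁿ ∩ V', there exists a finite sequence of cubes C₁,...,C_k of the partition with C₁ = x₀ + [0,d)ⁿ, y ∈ C_k, consecutive cubes sharing a face (i.e. their translation vectors differ by d times a standard basis vector), and the segment [x₀, y] covered by ⋃ᵢ Cᵢ. -/

import Mathlib

/-- The half-open cube `x₀ + d·t + [0,d)ⁿ` in `ℚⁿ`, for `x₀, t ∈ ℤⁿ`. -/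
def qcube (n d : ℕ) (x₀ t : Fin n → ℤ) : Set (Fin n → ℚ) :=
  {z | ∀ i, ((x₀ i : ℚ) + d * t i) ≤ z i ∧ z i < (x₀ i : ℚ) + d * t i + d}

/-- One face-step between cubes. -/
def QStep (n : ℕ) (a b : Fin n → ℤ) : Prop :=
  ∃ (l : Fin n) (ε : ℤ), (ε = 1 ∨ ε = -1) ∧ b = a + ε • Pi.single l 1

lemma qstep_exists_path (n : ℕ) (a b : Fin n → ℤ) :
    ∃ L : List (Fin n → ℤ), List.Chain (QStep n) a L ∧ (a :: L).getLast? = some b := by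
  generalize hN : (∑ i, (b i - a i).natAbs) = N
  induction N using Nat.strong_induction_on generalizing a with
  | _ N ih =>
  by_cases hab : a = b
  · exact ⟨[], by simp [hab]; exact List.Chain.nil⟩
  · obtain ⟨i, hi⟩ := Function.ne_iff.mp hab
    set ε : ℤ := if a i < b i then 1 else -1 with hε
    set a' := a + ε • Pi.single i 1 with ha'
    have hstep : QStep n a a' :=
      ⟨i, ε, by by_cases h : a i < b i <;> simp [hε, h], rfl⟩
    have ha'i : a' i = a i + ε := by simp [ha']
    have ha'j : ∀ j, j ≠ i → a' j = a j := by
      intro j hj; simp [ha', Pi.single_eq_of_ne hj]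
    have hlt : (∑ j, (b j - a' j).natAbs) < N := by
      subst hN
      refine Finset.sum_lt_sum (fun j _ => ?_) ⟨i, Finset.mem_univ i, ?_⟩
      · by_cases hj : j = i
        · subst hj
          rw [ha'i]
          rcases lt_or_gt_of_ne hi with h | h
          · simp only [hε, if_pos h]; omega
          · simp only [hε, if_neg (not_lt.mpr h.le)]; omega
        · rw [ha'j j hj]
      · rw [ha'i]
        rcases lt_or_gt_of_ne hi with h | h
        · simp only [hε, if_pos h]; omega
        · simp only [hε, if_neg (not_lt.mpr h.le)]; omega
    obtain ⟨L', hL', hlast⟩ := ih _ hlt a' rfl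
    exact ⟨a' :: L', List.chain_cons.mpr ⟨hstep, hL'⟩,
      by rw [List.getLast?_cons_cons]; exact hlast⟩

lemma qstep_chain_append (n : ℕ) {b : Fin n → ℤ} {M : List (Fin n → ℤ)}
    (h3 : List.Chain (QStep n) b M) :
    ∀ {a : Fin n → ℤ} {L : List (Fin n → ℤ)}, List.Chain (QStep n) a L →
      (a :: L).getLast? = some b → List.Chain (QStep n) a (L ++ M) := by
  intro a L
  induction L generalizing a with
  | nil =>
    intro _ h2
    simp only [List.getLast?_singleton, Option.some.injEq] at h2
    subst h2; simpa using h3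
  | cons x L ih =>
    intro h1 h2
    rw [show List.Chain (QStep n) a (x :: L) = List.IsChain (QStep n) (a :: x :: L) from rfl, List.chain_cons] at h1
    rw [List.getLast?_cons_cons] at h2
    exact List.chain_cons.mpr ⟨h1.1, ih h1.2 h2⟩

lemma qstep_exists_through (n : ℕ) (W : List (Fin n → ℤ)) :
    ∀ (a b : Fin n → ℤ), ∃ L : List (Fin n → ℤ), List.Chain (QStep n) a L ∧
      (a :: L).getLast? = some b ∧ ∀ w ∈ W, w ∈ a :: L := by
  induction W with
  | nil =>
    intro a b
    obtain ⟨L, h1, h2⟩ := qstep_exists_path n a b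
    exact ⟨L, h1, h2, by simp⟩
  | cons w W ih =>
    intro a b
    obtain ⟨L₁, h1, h2⟩ := qstep_exists_path n a w
    obtain ⟨L₂, h3, h4, h5⟩ := ih w b
    have hw : w ∈ a :: L₁ := List.mem_of_mem_getLast? (by rw [h2]; rfl)
    refine ⟨L₁ ++ L₂, qstep_chain_append n h3 h1 h2, ?_, ?_⟩
    · cases L₂ with
      | nil =>
        simp only [List.getLast?_singleton, Option.some.injEq] at h4
        subst h4
        simpa using h2
      | cons c T =>
        have he : a :: (L₁ ++ c :: T) = (a :: L₁) ++ (c :: T) := by simp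
        rw [he, List.getLast?_append_cons]
        rw [List.getLast?_cons_cons] at h4
        exact h4
    · have hwmem : w ∈ (a :: (L₁ ++ L₂)) := by
        rcases List.mem_cons.mp hw with h | h
        · simp [h]
        · exact List.mem_cons_of_mem _ (List.mem_append_left _ h)
      intro v hv
      rcases List.mem_cons.mp hv with hv | hv
      · subst hv; exact hwmem
      · rcases List.mem_cons.mp (h5 v hv) with h | h
        · subst h; exact hwmem
        · exact List.mem_cons_of_mem _ (List.mem_append_right _ h)

theorem stmt16 (n d : ℕ) (hd : 1 ≤ d)
    (V' : Set (Fin n → ℚ)) (hconv : Convex ℚ V')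
    (x₀ y : Fin n → ℤ)
    (hx₀ : (fun i => (x₀ i : ℚ)) ∈ V') (hy : (fun i => (y i : ℚ)) ∈ V') :
    ∃ (k : ℕ) (t : Fin (k + 1) → (Fin n → ℤ)),
      t 0 = 0 ∧
      (fun i => (y i : ℚ)) ∈ qcube n d x₀ (t (Fin.last k)) ∧
      (∀ j : Fin k, ∃ (l : Fin n) (ε : ℤ), (ε = 1 ∨ ε = -1) ∧
        t j.succ = t j.castSucc + ε • Pi.single l 1) ∧
      segment ℚ (fun i => (x₀ i : ℚ)) (fun i => (y i : ℚ)) ⊆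
        ⋃ j : Fin (k + 1), qcube n d x₀ (t j) := by
  have hd' : (0 : ℚ) < d := by exact_mod_cast hd
  -- the cube index of y
  set m : Fin n → ℤ := fun i => ⌊(((y i : ℚ)) - x₀ i) / d⌋ with hm
  -- generic fact: floor bounds give cube membership
  have hfloor : ∀ (r : ℚ), (d : ℚ) * ⌊r / d⌋ ≤ r ∧ r < d * ⌊r / d⌋ + d := by
    intro r
    constructor
    · have := Int.floor_le (r / d)
      have h2 : (⌊r / d⌋ : ℚ) * d ≤ r := (le_div_iff₀ hd').mp this
      linarith
    · have := Int.lt_floor_add_one (r / d)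
      have h2 : r < ((⌊r / d⌋ : ℚ) + 1) * d := (div_lt_iff₀ hd').mp this
      linarith
  -- waypoints : all cubes in the box between 0 and m
  set W : List (Fin n → ℤ) :=
    (Fintype.piFinset (fun i => Finset.Icc (min 0 (m i)) (max 0 (m i)))).toList with hW
  obtain ⟨L, hch, hlast, hcov⟩ := qstep_exists_through n W 0 m
  refine ⟨L.length, fun j => (0 :: L).get ⟨j.1, j.2⟩, rfl, ?_, ?_, ?_⟩
  · -- y is in the last cube
    have hne : (0 :: L : List (Fin n → ℤ)) ≠ [] := by simp
    have hgl : ((0 : Fin n → ℤ) :: L).getLast hne = m := by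
      have := List.getLast?_eq_getLast_of_ne_nil hne
      rw [hlast] at this
      exact (Option.some_inj.mp this).symm
    have hkey : ((0 : Fin n → ℤ) :: L).get ⟨L.length, by simp⟩ = m := by
      rw [← hgl, List.getLast_eq_getElem]
      congr 1
    intro i
    simp only [Fin.last]
    rw [hkey]
    have := hfloor ((y i : ℚ) - x₀ i)
    constructor
    · have := this.1; simp only [hm]; linarith
    · have := this.2; simp only [hm]; linarith
  · -- consecutive steps
    intro j
    have hc' : List.Chain' (QStep n) (0 :: L) := hch
    have := List.isChain_iff_getElem.mp hc' j.1 (by simpa using j.2)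
    obtain ⟨l, ε, hε, heq⟩ := this
    exact ⟨l, ε, hε, heq⟩
  · -- coverage of the segment
    rintro z ⟨p, q, hp, hq, hpq, hz⟩
    -- the cube containing z
    set t' : Fin n → ℤ := fun i => ⌊(z i - x₀ i) / d⌋ with ht'
    have hzi : ∀ i, z i - x₀ i = q * ((y i : ℚ) - x₀ i) := by
      intro i
      have := congrFun hz i
      simp only [Pi.add_apply, Pi.smul_apply, smul_eq_mul] at this
      linear_combination (-1 : ℚ) * this + (x₀ i : ℚ) * hpq
    -- t' is in the box
    have hbox : ∀ i, min 0 (m i) ≤ t' i ∧ t' i ≤ max 0 (m i) := by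
      intro i
      set c : ℚ := (y i : ℚ) - x₀ i with hc
      have hu : z i - x₀ i = q * c := hzi i
      rcases le_total 0 c with h | h
      · have h1 : 0 ≤ q * c := mul_nonneg hq h
        have h2 : q * c ≤ c := by nlinarith
        have hge : (0 : ℤ) ≤ t' i := by
          simp only [ht']
          apply Int.floor_nonneg.mpr
          rw [hu]
          positivity
        have hle : t' i ≤ m i := by
          simp only [ht', hm]
          apply Int.floor_le_floor
          rw [hu]
          gcongr
        exact ⟨le_trans (min_le_left _ _) hge, le_trans hle (le_max_right _ _)⟩
      · have h1 : q * c ≤ 0 := mul_nonpos_of_nonneg_of_nonpos hq h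
        have h2 : c ≤ q * c := by nlinarith
        have hle : t' i ≤ 0 := by
          simp only [ht']
          apply Int.floor_nonpos
          rw [hu]
          exact div_nonpos_of_nonpos_of_nonneg h1 hd'.le
        have hge : m i ≤ t' i := by
          simp only [ht', hm]
          apply Int.floor_le_floor
          rw [hu]
          gcongr
        exact ⟨le_trans (min_le_right _ _) hge, le_trans hle (le_max_left _ _)⟩
    -- hence t' is among the waypoints, hence in the path
    have hmem : t' ∈ (0 : Fin n → ℤ) :: L := by
      apply hcov
      rw [hW, Finset.mem_toList, Fintype.mem_piFinset]
      intro i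
      rw [Finset.mem_Icc]
      exact hbox i
    obtain ⟨idx, hidx⟩ := List.mem_iff_get.mp hmem
    have hq : z ∈ qcube n d x₀ t' := by
      intro i
      have := hfloor (z i - x₀ i)
      constructor
      · have := this.1; simp only [ht']; linarith
      · have := this.2; simp only [ht']; linarith
    exact Set.mem_iUnion.mpr ⟨⟨idx.1, by simpa using idx.2⟩, hidx.symm ▸ hq⟩
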